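/- arXiv:2112.10142 — 2 statements merged into one kernel-verified Lean document; each statement's English description precedes it below -/
import Mathlib

section
/- For every value function v and weighting functions w⁻, w⁺, the GSR-CPT ρ_{(v,w⁻,w⁺)} is a monetary risk measure on bounded random variables: it is translation invariant, i.e. ρ_{(v,w⁻,w⁺)}(ξ + c) = ρ_{(v,w⁻,w⁺)}(ξ) + c for every bounded random variable ξ and every c ∈ ℝ, and monotone, i.e. if η(ω) ≤ ξ(ω) for every ω ∈ Ω then ρ_{(v,w⁻,w⁺)}(η) ≤ ρ_{(v,w⁻,w⁺)}(ξ). -/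
open MeasureTheory Set

noncomputable section

/-- A value function: strictly increasing `v : ℝ → ℝ` with `v 0 = 0`. -/
def IsValueFun (v : ℝ → ℝ) : Prop := StrictMono v ∧ v 0 = 0

/-- A weighting function: a strictly increasing `w : [0,1] → [0,1]`
with `w 0 = 0` and `w 1 = 1`. -/
def IsWeightFun (w : ℝ → ℝ) : Prop :=
  StrictMonoOn w (Icc 0 1) ∧ MapsTo w (Icc 0 1) (Icc 0 1) ∧ w 0 = 0 ∧ w 1 = 1

/-- The CPT distorted expectation
`E_{w⁻w⁺}[v(ζ)] = ∫₀^∞ w⁺(ℙ(v(ζ) ≥ t)) dt − ∫₀^∞ w⁻(ℙ(v(ζ) ≤ −t)) dt`. -/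
def cptE {Ω : Type*} [MeasurableSpace Ω] (P : Measure Ω)
    (v wm wp : ℝ → ℝ) (ζ : Ω → ℝ) : ℝ :=
  (∫ t in Ioi (0:ℝ), wp (P {ω | t ≤ v (ζ ω)}).toReal)
    - ∫ t in Ioi (0:ℝ), wm (P {ω | v (ζ ω) ≤ -t}).toReal

/-- Both integrals defining the CPT distorted expectation are finite. -/
def CptWellDef {Ω : Type*} [MeasurableSpace Ω] (P : Measure Ω)
    (v wm wp : ℝ → ℝ) (ζ : Ω → ℝ) : Prop :=
  IntegrableOn (fun t => wp (P {ω | t ≤ v (ζ ω)}).toReal) (Ioi 0) ∧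
    IntegrableOn (fun t => wm (P {ω | v (ζ ω) ≤ -t}).toReal) (Ioi 0)

/-- The generalized shortfall risk measure (GSR-CPT):
`ρ_{(v,w⁻,w⁺)}(ξ) = inf { x : E_{w⁻w⁺}[v(ξ − x)] ≤ 0 }`, with `inf ∅ = +∞`. -/
def gsr {Ω : Type*} [MeasurableSpace Ω] (P : Measure Ω)
    (v wm wp : ℝ → ℝ) (ξ : Ω → ℝ) : EReal :=
  sInf ((fun x : ℝ => (x : EReal)) ''
    {x : ℝ | cptE P v wm wp (fun ω => ξ ω - x) ≤ 0})

/-- A bounded random variable. -/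
def IsBddRV {Ω : Type*} [MeasurableSpace Ω] (ξ : Ω → ℝ) : Prop :=
  Measurable ξ ∧ ∃ M : ℝ, ∀ ω, |ξ ω| ≤ M

/-- A weighting function which is continuously differentiable on `[0,1]`
with strictly positive derivative. -/
def SmoothWeight (w : ℝ → ℝ) : Prop :=
  IsWeightFun w ∧ ContDiffOn ℝ 1 w (Icc 0 1) ∧
    ∀ p ∈ Icc (0:ℝ) 1, 0 < derivWithin w (Icc 0 1) p

/-- Adding a real constant is an order isomorphism of `EReal`. -/
def addCoeOrderIso (c : ℝ) : EReal ≃o EReal where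
  toFun x := x + (c : EReal)
  invFun x := x - (c : EReal)
  left_inv x := EReal.add_sub_cancel_right
  right_inv x := EReal.sub_add_cancel
  map_rel_iff' := (EReal.addLECancellable_coe c).add_le_add_iff_right

/-- An antitone function, bounded by 1, vanishing beyond some `B`, is
integrable on `(0,∞)`. -/
lemma integrable_aux {g : ℝ → ℝ} (hg : Antitone g) (hb : ∀ t, |g t| ≤ 1)
    (B : ℝ) (hB : ∀ t, B < t → g t = 0) : IntegrableOn g (Ioi 0) := by
  have hmeas : Measurable g := hg.measurable
  have hind : Integrable ((Ioc (0:ℝ) B).indicator fun _ => (1:ℝ))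
      (volume.restrict (Ioi 0)) := by
    rw [integrable_indicator_iff measurableSet_Ioc]
    refine (integrableOn_const_iff (C := (1:ℝ)) (by simp)).2 (Or.inr ?_)
    calc (volume.restrict (Ioi 0)) (Ioc 0 B) ≤ volume (Ioc 0 B) :=
          Measure.restrict_le_self _
      _ < ⊤ := measure_Ioc_lt_top
  refine hind.mono' (hmeas.aestronglyMeasurable) ?_
  filter_upwards [ae_restrict_mem measurableSet_Ioi] with t ht
  rcases le_or_gt t B with h | h
  · have : t ∈ Ioc (0:ℝ) B := ⟨ht, h⟩
    simp [indicator_of_mem this, Real.norm_eq_abs, hb t]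
  · have hz : ‖g t‖ = 0 := by simp [hB t h]
    rw [hz]
    exact indicator_nonneg (fun a _ => zero_le_one) t

lemma wp_integrable {Ω : Type*} [MeasurableSpace Ω] (P : Measure Ω)
    [IsProbabilityMeasure P] {v wp : ℝ → ℝ} (hv : IsValueFun v)
    (hwp : IsWeightFun wp) {ζ : Ω → ℝ} {M : ℝ} (hM : ∀ ω, |ζ ω| ≤ M) :
    IntegrableOn (fun t => wp (P {ω | t ≤ v (ζ ω)}).toReal) (Ioi 0) := by
  have hPmem : ∀ t : ℝ, (P {ω | t ≤ v (ζ ω)}).toReal ∈ Icc (0:ℝ) 1 :=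
    fun t => ⟨ENNReal.toReal_nonneg, by
      simpa using ENNReal.toReal_mono (by simp) (prob_le_one (μ := P))⟩
  refine integrable_aux ?_ ?_ (v M) ?_
  · intro t s hts
    have hsub : {ω | s ≤ v (ζ ω)} ⊆ {ω | t ≤ v (ζ ω)} := fun ω hω =>
      le_trans hts hω
    have := ENNReal.toReal_mono (measure_ne_top P _) (measure_mono hsub)
    exact hwp.1.monotoneOn (hPmem s) (hPmem t) this
  · intro t
    have h1 := hwp.2.1 (hPmem t)
    rw [abs_le]
    exact ⟨le_trans (by norm_num) h1.1, h1.2⟩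
  · intro t ht
    have : {ω | t ≤ v (ζ ω)} = ∅ := by
      ext ω
      simp only [mem_setOf_eq, mem_empty_iff_false, iff_false, not_le]
      calc v (ζ ω) ≤ v M := hv.1.monotone (le_trans (le_abs_self _) (hM ω))
        _ < t := ht
    rw [this, measure_empty]
    simpa using hwp.2.2.1

lemma wm_integrable {Ω : Type*} [MeasurableSpace Ω] (P : Measure Ω)
    [IsProbabilityMeasure P] {v wm : ℝ → ℝ} (hv : IsValueFun v)
    (hwm : IsWeightFun wm) {ζ : Ω → ℝ} {M : ℝ} (hM : ∀ ω, |ζ ω| ≤ M) :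
    IntegrableOn (fun t => wm (P {ω | v (ζ ω) ≤ -t}).toReal) (Ioi 0) := by
  have hPmem : ∀ t : ℝ, (P {ω | v (ζ ω) ≤ -t}).toReal ∈ Icc (0:ℝ) 1 :=
    fun t => ⟨ENNReal.toReal_nonneg, by
      simpa using ENNReal.toReal_mono (by simp) (prob_le_one (μ := P))⟩
  refine integrable_aux ?_ ?_ (-v (-M)) ?_
  · intro t s hts
    have hsub : {ω | v (ζ ω) ≤ -s} ⊆ {ω | v (ζ ω) ≤ -t} := fun ω hω => by
      simp only [mem_setOf_eq] at hω ⊢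
      linarith
    have := ENNReal.toReal_mono (measure_ne_top P _) (measure_mono hsub)
    exact hwm.1.monotoneOn (hPmem s) (hPmem t) this
  · intro t
    have h1 := hwm.2.1 (hPmem t)
    rw [abs_le]
    exact ⟨le_trans (by norm_num) h1.1, h1.2⟩
  · intro t ht
    have : {ω | v (ζ ω) ≤ -t} = ∅ := by
      ext ω
      simp only [mem_setOf_eq, mem_empty_iff_false, iff_false, not_le]
      have h1 : -M ≤ ζ ω := neg_le_of_abs_le (hM ω)
      have h2 : v (-M) ≤ v (ζ ω) := hv.1.monotone h1
      linarith
    rw [this, measure_empty]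
    simpa using hwm.2.2.1

lemma cptE_mono {Ω : Type*} [MeasurableSpace Ω] (P : Measure Ω)
    [IsProbabilityMeasure P] {v wm wp : ℝ → ℝ} (hv : IsValueFun v)
    (hwm : IsWeightFun wm) (hwp : IsWeightFun wp) {ζ₁ ζ₂ : Ω → ℝ}
    {M₁ M₂ : ℝ} (h₁ : ∀ ω, |ζ₁ ω| ≤ M₁) (h₂ : ∀ ω, |ζ₂ ω| ≤ M₂)
    (hle : ∀ ω, ζ₁ ω ≤ ζ₂ ω) :
    cptE P v wm wp ζ₁ ≤ cptE P v wm wp ζ₂ := by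
  have hPmem : ∀ s : Set Ω, (P s).toReal ∈ Icc (0:ℝ) 1 :=
    fun s => ⟨ENNReal.toReal_nonneg, by
      simpa using ENNReal.toReal_mono (by simp) (prob_le_one (μ := P))⟩
  have hA : (∫ t in Ioi (0:ℝ), wp (P {ω | t ≤ v (ζ₁ ω)}).toReal)
      ≤ ∫ t in Ioi (0:ℝ), wp (P {ω | t ≤ v (ζ₂ ω)}).toReal := by
    refine integral_mono (wp_integrable P hv hwp h₁) (wp_integrable P hv hwp h₂)
      fun t => ?_
    have hsub : {ω | t ≤ v (ζ₁ ω)} ⊆ {ω | t ≤ v (ζ₂ ω)} := fun ω hω =>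
      le_trans hω (hv.1.monotone (hle ω))
    exact hwp.1.monotoneOn (hPmem _) (hPmem _)
      (ENNReal.toReal_mono (measure_ne_top P _) (measure_mono hsub))
  have hB : (∫ t in Ioi (0:ℝ), wm (P {ω | v (ζ₂ ω) ≤ -t}).toReal)
      ≤ ∫ t in Ioi (0:ℝ), wm (P {ω | v (ζ₁ ω) ≤ -t}).toReal := by
    refine integral_mono (wm_integrable P hv hwm h₂) (wm_integrable P hv hwm h₁)
      fun t => ?_
    have hsub : {ω | v (ζ₂ ω) ≤ -t} ⊆ {ω | v (ζ₁ ω) ≤ -t} := fun ω hω =>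
      le_trans (hv.1.monotone (hle ω)) hω
    exact hwm.1.monotoneOn (hPmem _) (hPmem _)
      (ENNReal.toReal_mono (measure_ne_top P _) (measure_mono hsub))
  unfold cptE
  linarith

/-- the GSR-CPT is a monetary risk measure on bounded random
variables: it is translation invariant and monotone. -/
theorem gsr_monetary {Ω : Type*} [MeasurableSpace Ω] (P : Measure Ω)
    [IsProbabilityMeasure P]
    (v wm wp : ℝ → ℝ) (hv : IsValueFun v) (hwm : IsWeightFun wm)
    (hwp : IsWeightFun wp) :
    (∀ ξ : Ω → ℝ, IsBddRV ξ → ∀ c : ℝ,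
        gsr P v wm wp (fun ω => ξ ω + c) = gsr P v wm wp ξ + (c : EReal)) ∧
    (∀ η ξ : Ω → ℝ, IsBddRV η → IsBddRV ξ → (∀ ω, η ω ≤ ξ ω) →
        gsr P v wm wp η ≤ gsr P v wm wp ξ) := by
  constructor
  · -- translation invariance
    intro ξ _ c
    set S := {x : ℝ | cptE P v wm wp (fun ω => ξ ω - x) ≤ 0} with hS
    have hset : {x : ℝ | cptE P v wm wp (fun ω => (ξ ω + c) - x) ≤ 0}
        = (fun y => y + c) '' S := by
      ext x
      simp only [mem_image, hS, mem_setOf_eq]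
      constructor
      · intro hx
        refine ⟨x - c, ?_, by ring⟩
        convert hx using 3 with ω
        ring
      · rintro ⟨y, hy, rfl⟩
        convert hy using 3 with ω
        ring
    have himg : (fun x : ℝ => (x : EReal)) '' ((fun y => y + c) '' S)
        = (addCoeOrderIso c) '' ((fun x : ℝ => (x : EReal)) '' S) := by
      rw [← image_comp, ← image_comp]
      refine image_congr fun y _ => ?_
      simp [addCoeOrderIso, EReal.coe_add]
    unfold gsr
    rw [hset, himg, ← map_sInf]
    rfl
  · -- monotonicity
    intro η ξ hη hξ hle
    obtain ⟨_, Mη, hMη⟩ := hη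
    obtain ⟨_, Mξ, hMξ⟩ := hξ
    refine sInf_le_sInf (image_mono fun x hx => ?_)
    simp only [mem_setOf_eq] at hx ⊢
    refine le_trans (cptE_mono P hv hwm hwp (ζ₁ := fun ω => η ω - x)
      (ζ₂ := fun ω => ξ ω - x) (M₁ := Mη + |x|) (M₂ := Mξ + |x|)
      ?_ ?_ fun ω => by show η ω - x ≤ ξ ω - x; linarith [hle ω]) hx
    · intro ω
      calc |η ω - x| ≤ |η ω| + |x| := abs_sub _ _
        _ ≤ Mη + |x| := by linarith [hMη ω]
    · intro ω
      calc |ξ ω - x| ≤ |ξ ω| + |x| := abs_sub _ _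
        _ ≤ Mξ + |x| := by linarith [hMξ ω]
end
end

section
/- Fix weighting functions w⁻, w⁺ that are continuously differentiable on [0,1] with strictly positive derivatives. Let A₁, …, A_K be bounded random variables and let a_k⁻ ≤ a_k⁺ be real numbers with [a_k⁻, a_k⁺] contained in the open interval (essinf A_k, esssup A_k) for each k. Let v be a value function such that for each k the map x ↦ E_{w⁻w⁺}[v(A_k − x)] is continuous on ℝ. Then the following are equivalent: (i) E_{w⁻w⁺}[v(A_k − a_k⁺)] ≤ 0 and E_{w⁻w⁺}[v(A_k − a_k⁻)] ≥ 0 for all k = 1, …, K; (ii) a_k⁻ ≤ ρ_{(v,w⁻,w⁺)}(A_k) ≤ a_k⁺ for all k = 1, …, K. -/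
open MeasureTheory Set Filter

noncomputable section

section Helpers
variable {Ω : Type*} [MeasurableSpace Ω] {P : Measure Ω} [IsProbabilityMeasure P]

lemma toReal_mem_Icc (s : Set Ω) : (P s).toReal ∈ Icc (0:ℝ) 1 :=
  ⟨ENNReal.toReal_nonneg, by
    simpa using ENNReal.toReal_mono ENNReal.one_ne_top (prob_le_one (μ := P) (s := s))⟩

lemma integrableOn_of_antitone_of_zero {f : ℝ → ℝ} (hf : Antitone f)
    (hmem : ∀ t, f t ∈ Icc (0:ℝ) 1) {T : ℝ} (hT : ∀ t, T ≤ t → f t = 0) :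
    IntegrableOn f (Ioi (0:ℝ)) := by
  rw [← Ioc_union_Ioi_eq_Ioi (le_max_right T 0)]
  refine IntegrableOn.union ?_ ?_
  · have hc : IntegrableOn (fun _ : ℝ => (1:ℝ)) (Ioc 0 (max T 0)) volume :=
      integrableOn_const measure_Ioc_lt_top.ne
    refine Integrable.mono' hc hf.measurable.aestronglyMeasurable.restrict
      (Eventually.of_forall fun t => ?_)
    rw [Real.norm_eq_abs, abs_of_nonneg (hmem t).1]
    exact (hmem t).2
  · have heq : EqOn f (fun _ => (0:ℝ)) (Ioi (max T 0)) := fun t ht =>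
      hT t (le_of_lt (lt_of_le_of_lt (le_max_left T 0) ht))
    exact (integrableOn_congr_fun heq measurableSet_Ioi).2 (integrableOn_zero)

variable {v wm wp : ℝ → ℝ} {A : Ω → ℝ} {M : ℝ}

lemma intble_p (hwp : IsWeightFun wp) (hv : IsValueFun v)
    (hM : ∀ ω, |A ω| ≤ M) (x : ℝ) :
    IntegrableOn (fun t => wp (P {ω | t ≤ v (A ω - x)}).toReal) (Ioi (0:ℝ)) := by
  refine integrableOn_of_antitone_of_zero ?_ (fun t => hwp.2.1 (toReal_mem_Icc _))
    (T := v (M - x) + 1) ?_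
  · intro s t hst
    refine hwp.1.monotoneOn (toReal_mem_Icc _) (toReal_mem_Icc _)
      (ENNReal.toReal_mono (measure_ne_top _ _)
        (measure_mono fun ω h => le_trans hst h))
  · intro t ht
    have hempty : {ω | t ≤ v (A ω - x)} = (∅ : Set Ω) := by
      ext ω
      simp only [mem_setOf_eq, mem_empty_iff_false, iff_false, not_le]
      calc v (A ω - x) ≤ v (M - x) :=
            hv.1.monotone (by linarith [(abs_le.1 (hM ω)).2])
        _ < t := by linarith
    rw [hempty]
    simp [hwp.2.2.1]

lemma intble_m (hwm : IsWeightFun wm) (hv : IsValueFun v)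
    (hM : ∀ ω, |A ω| ≤ M) (x : ℝ) :
    IntegrableOn (fun t => wm (P {ω | v (A ω - x) ≤ -t}).toReal) (Ioi (0:ℝ)) := by
  refine integrableOn_of_antitone_of_zero ?_ (fun t => hwm.2.1 (toReal_mem_Icc _))
    (T := -(v (-M - x)) + 1) ?_
  · intro s t hst
    refine hwm.1.monotoneOn (toReal_mem_Icc _) (toReal_mem_Icc _)
      (ENNReal.toReal_mono (measure_ne_top _ _)
        (measure_mono fun ω h => le_trans h (neg_le_neg hst)))
  · intro t ht
    have hempty : {ω | v (A ω - x) ≤ -t} = (∅ : Set Ω) := by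
      ext ω
      simp only [mem_setOf_eq, mem_empty_iff_false, iff_false, not_le]
      calc -t < v (-M - x) := by linarith
        _ ≤ v (A ω - x) := hv.1.monotone (by linarith [(abs_le.1 (hM ω)).1])
    rw [hempty]
    simp [hwm.2.2.1]

lemma p_mono_x (hwp : IsWeightFun wp) (hv : IsValueFun v) {x y : ℝ} (hxy : x ≤ y) (t : ℝ) :
    wp (P {ω | t ≤ v (A ω - y)}).toReal ≤ wp (P {ω | t ≤ v (A ω - x)}).toReal := by
  refine hwp.1.monotoneOn (toReal_mem_Icc _) (toReal_mem_Icc _)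
    (ENNReal.toReal_mono (measure_ne_top _ _) (measure_mono fun ω h =>
      le_trans h (hv.1.monotone (by linarith))))

lemma m_mono_x (hwm : IsWeightFun wm) (hv : IsValueFun v) {x y : ℝ} (hxy : x ≤ y) (t : ℝ) :
    wm (P {ω | v (A ω - x) ≤ -t}).toReal ≤ wm (P {ω | v (A ω - y) ≤ -t}).toReal := by
  refine hwm.1.monotoneOn (toReal_mem_Icc _) (toReal_mem_Icc _)
    (ENNReal.toReal_mono (measure_ne_top _ _) (measure_mono fun ω h =>
      le_trans (hv.1.monotone (by linarith)) h))

lemma cptE_anti (hwm : IsWeightFun wm) (hwp : IsWeightFun wp) (hv : IsValueFun v)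
    (hM : ∀ ω, |A ω| ≤ M) {x y : ℝ} (hxy : x ≤ y) :
    cptE P v wm wp (fun ω => A ω - y) ≤ cptE P v wm wp (fun ω => A ω - x) := by
  have h1 : (∫ t in Ioi (0:ℝ), wp (P {ω | t ≤ v (A ω - y)}).toReal)
      ≤ ∫ t in Ioi (0:ℝ), wp (P {ω | t ≤ v (A ω - x)}).toReal :=
    setIntegral_mono_on (intble_p hwp hv hM y) (intble_p hwp hv hM x)
      measurableSet_Ioi (fun t _ => p_mono_x hwp hv hxy t)
  have h2 : (∫ t in Ioi (0:ℝ), wm (P {ω | v (A ω - x) ≤ -t}).toReal)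
      ≤ ∫ t in Ioi (0:ℝ), wm (P {ω | v (A ω - y) ≤ -t}).toReal :=
    setIntegral_mono_on (intble_m hwm hv hM x) (intble_m hwm hv hM y)
      measurableSet_Ioi (fun t _ => m_mono_x hwm hv hxy t)
  unfold cptE
  linarith

lemma layercake_eq (hv : IsValueFun v) (hAm : Measurable A)
    (hM : ∀ ω, |A ω| ≤ M) (x : ℝ) :
    ∫ ω, max (v (A ω - x)) 0 ∂P
      = ∫ t in Ioi (0:ℝ), (P {ω | t ≤ v (A ω - x)}).toReal := by
  have hg_meas : Measurable fun ω => max (v (A ω - x)) 0 :=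
    (hv.1.monotone.measurable.comp (hAm.sub measurable_const)).max measurable_const
  have hg_int : Integrable (fun ω => max (v (A ω - x)) 0) P := by
    refine (integrable_const (max (v (M - x)) 0)).mono'
      hg_meas.aestronglyMeasurable (Eventually.of_forall fun ω => ?_)
    rw [Real.norm_eq_abs, abs_of_nonneg (le_max_right _ _)]
    exact max_le_max (hv.1.monotone (by linarith [(abs_le.1 (hM ω)).2])) le_rfl
  rw [hg_int.integral_eq_integral_meas_le (Eventually.of_forall fun ω => le_max_right _ _)]
  refine setIntegral_congr_fun measurableSet_Ioi (fun t ht => ?_)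
  congr 1
  apply congrArg
  ext ω
  simp only [mem_setOf_eq, le_max_iff]
  exact or_iff_left (by simpa using not_le.2 (mem_Ioi.1 ht))

lemma cptE_strict (hwm : IsWeightFun wm) (hwp : IsWeightFun wp) (hv : IsValueFun v)
    (hAm : Measurable A) (hM : ∀ ω, |A ω| ≤ M) {x y : ℝ} (hxy : x < y)
    (hy : P {ω | y < A ω} ≠ 0) :
    cptE P v wm wp (fun ω => A ω - y) < cptE P v wm wp (fun ω => A ω - x) := by
  have h2 : (∫ t in Ioi (0:ℝ), wm (P {ω | v (A ω - x) ≤ -t}).toReal)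
      ≤ ∫ t in Ioi (0:ℝ), wm (P {ω | v (A ω - y) ≤ -t}).toReal :=
    setIntegral_mono_on (intble_m hwm hv hM x) (intble_m hwm hv hM y)
      measurableSet_Ioi (fun t _ => m_mono_x hwm hv hxy.le t)
  have h1 : (∫ t in Ioi (0:ℝ), wp (P {ω | t ≤ v (A ω - y)}).toReal)
      < ∫ t in Ioi (0:ℝ), wp (P {ω | t ≤ v (A ω - x)}).toReal := by
    refine lt_of_le_of_ne (setIntegral_mono_on (intble_p hwp hv hM y)
      (intble_p hwp hv hM x) measurableSet_Ioi (fun t _ => p_mono_x hwp hv hxy.le t)) ?_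
    intro heq
    -- equality of wp-integrals forces a.e. equality of tail probabilities
    have hD_int : Integrable (fun t => wp (P {ω | t ≤ v (A ω - x)}).toReal
        - wp (P {ω | t ≤ v (A ω - y)}).toReal) (volume.restrict (Ioi 0)) :=
      (intble_p hwp hv hM x).sub (intble_p hwp hv hM y)
    have h0 : ∫ t in Ioi (0:ℝ), (wp (P {ω | t ≤ v (A ω - x)}).toReal
        - wp (P {ω | t ≤ v (A ω - y)}).toReal) = 0 := by
      rw [integral_sub (intble_p hwp hv hM x) (intble_p hwp hv hM y), heq, sub_self]
    have hae := (integral_eq_zero_iff_of_nonneg_ae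
      (Eventually.of_forall fun t => sub_nonneg.2 (p_mono_x hwp hv hxy.le t)) hD_int).1 h0
    have hFp : (fun t => (P {ω | t ≤ v (A ω - x)}).toReal)
        =ᵐ[volume.restrict (Ioi 0)] (fun t => (P {ω | t ≤ v (A ω - y)}).toReal) := by
      filter_upwards [hae] with t ht
      have : wp (P {ω | t ≤ v (A ω - x)}).toReal = wp (P {ω | t ≤ v (A ω - y)}).toReal := by
        have := sub_eq_zero.1 ht
        linarith [this]
      exact hwp.1.injOn (toReal_mem_Icc _) (toReal_mem_Icc _) this
    have heqI : ∫ ω, max (v (A ω - x)) 0 ∂P = ∫ ω, max (v (A ω - y)) 0 ∂P := by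
      rw [layercake_eq hv hAm hM x, layercake_eq hv hAm hM y]
      exact integral_congr_ae hFp
    -- but the expectations differ strictly
    have hg_int : ∀ z : ℝ, Integrable (fun ω => max (v (A ω - z)) 0) P := by
      intro z
      refine (integrable_const (max (v (M - z)) 0)).mono'
        (((hv.1.monotone.measurable.comp (hAm.sub measurable_const)).max
          measurable_const).aestronglyMeasurable) (Eventually.of_forall fun ω => ?_)
      rw [Real.norm_eq_abs, abs_of_nonneg (le_max_right _ _)]
      exact max_le_max (hv.1.monotone (by linarith [(abs_le.1 (hM ω)).2])) le_rfl
    have hd_nn : ∀ ω, 0 ≤ max (v (A ω - x)) 0 - max (v (A ω - y)) 0 :=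
      fun ω => sub_nonneg.2 (max_le_max (hv.1.monotone (by linarith)) le_rfl)
    have hpos : 0 < ∫ ω, (max (v (A ω - x)) 0 - max (v (A ω - y)) 0) ∂P := by
      rw [integral_pos_iff_support_of_nonneg_ae (Eventually.of_forall hd_nn)
        ((hg_int x).sub (hg_int y))]
      refine lt_of_lt_of_le (pos_iff_ne_zero.2 hy) (measure_mono ?_)
      intro ω hω
      have hω' : y < A ω := hω
      have h1 : (0:ℝ) < v (A ω - y) := by
        have := hv.1 (show (0:ℝ) < A ω - y by linarith)
        rwa [hv.2] at this
      have h2 : v (A ω - y) < v (A ω - x) := hv.1 (by linarith)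
      simp only [Function.mem_support]
      rw [max_eq_left (by linarith : (0:ℝ) ≤ v (A ω - x)),
        max_eq_left h1.le]
      intro hc
      exact absurd (sub_eq_zero.1 hc) (ne_of_gt h2)
    rw [integral_sub (hg_int x) (hg_int y), heqI, sub_self] at hpos
    exact lt_irrefl _ hpos
  unfold cptE
  linarith
end Helpers


/-- characterization of the value functions consistent with
certainty-equivalent information: the inequalities
`E_{w⁻w⁺}[v(A_k − a_k⁺)] ≤ 0` and `E_{w⁻w⁺}[v(A_k − a_k⁻)] ≥ 0` hold for all
`k` iff `a_k⁻ ≤ ρ_{(v,w⁻,w⁺)}(A_k) ≤ a_k⁺` for all `k`. -/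


theorem ce_characterization {Ω : Type*} [MeasurableSpace Ω] (P : Measure Ω)
    [IsProbabilityMeasure P]
    (wm wp : ℝ → ℝ) (hwm : SmoothWeight wm) (hwp : SmoothWeight wp)
    (K : ℕ) (A : Fin K → Ω → ℝ) (hA : ∀ k, IsBddRV (A k))
    (am ap : Fin K → ℝ) (h_le : ∀ k, am k ≤ ap k)
    (h_in : ∀ k, essInf (A k) P < am k ∧ ap k < essSup (A k) P)
    (v : ℝ → ℝ) (hv : IsValueFun v)
    (hcont : ∀ k, Continuous fun x : ℝ =>
      cptE P v wm wp (fun ω => A k ω - x)) :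
    (∀ k, cptE P v wm wp (fun ω => A k ω - ap k) ≤ 0 ∧
        0 ≤ cptE P v wm wp (fun ω => A k ω - am k))
      ↔ ∀ k, (am k : EReal) ≤ gsr P v wm wp (A k) ∧
          gsr P v wm wp (A k) ≤ (ap k : EReal) := by
  have hwm' : IsWeightFun wm := hwm.1
  have hwp' : IsWeightFun wp := hwp.1
  constructor
  · intro h k
    obtain ⟨hAm, M, hM⟩ := hA k
    refine ⟨?_, sInf_le ⟨ap k, (h k).1, rfl⟩⟩
    refine le_sInf ?_
    rintro b ⟨x, hx, rfl⟩
    rw [EReal.coe_le_coe_iff]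
    by_contra hlt
    push_neg at hlt
    have hyP : P {ω | am k < A k ω} ≠ 0 := by
      intro h0
      have hae : ∀ᵐ ω ∂P, A k ω ≤ am k := by
        rw [ae_iff]
        simpa only [not_le] using h0
      have hbdd : IsCoboundedUnder (· ≤ ·) (ae P) (A k) :=
        IsBoundedUnder.isCoboundedUnder_le
          ⟨-M, eventually_map.2 (Eventually.of_forall fun ω => (abs_le.1 (hM ω)).1)⟩
      have hle : essSup (A k) P ≤ am k := limsup_le_of_le hbdd hae
      have hgt : am k < essSup (A k) P := lt_of_le_of_lt (h_le k) (h_in k).2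
      exact absurd hle (not_le.2 hgt)
    have hstrict := cptE_strict (P := P) hwm' hwp' hv hAm hM hlt hyP
    have hx' : cptE P v wm wp (fun ω => A k ω - x) ≤ 0 := hx
    linarith [(h k).2]
  · intro h k
    obtain ⟨hAm, M, hM⟩ := hA k
    constructor
    · have hall : ∀ y ∈ Ioi (ap k), cptE P v wm wp (fun ω => A k ω - y) ≤ 0 := by
        intro y hy
        have h1 : gsr P v wm wp (A k) < (y : EReal) :=
          lt_of_le_of_lt (h k).2 (EReal.coe_lt_coe_iff.2 hy)
        obtain ⟨b, hb, hblt⟩ := sInf_lt_iff.1 h1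
        obtain ⟨x, hx, rfl⟩ := hb
        exact le_trans (cptE_anti (P := P) hwm' hwp' hv hM
          (le_of_lt (EReal.coe_lt_coe_iff.1 hblt))) hx
      have htend : Tendsto (fun x : ℝ => cptE P v wm wp (fun ω => A k ω - x))
          (nhdsWithin (ap k) (Ioi (ap k)))
          (nhds (cptE P v wm wp (fun ω => A k ω - ap k))) :=
        ((hcont k).tendsto (ap k)).mono_left nhdsWithin_le_nhds
      exact le_of_tendsto htend (eventually_nhdsWithin_of_forall hall)
    · by_contra hneg
      push_neg at hneg
      have hopen : IsOpen ((fun x : ℝ => cptE P v wm wp (fun ω => A k ω - x)) ⁻¹' Iio 0) :=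
        (hcont k).isOpen_preimage _ isOpen_Iio
      obtain ⟨ε, hε, hball⟩ := Metric.isOpen_iff.1 hopen (am k) hneg
      have hx : cptE P v wm wp (fun ω => A k ω - (am k - ε/2)) < 0 := by
        apply hball
        rw [Metric.mem_ball, Real.dist_eq]
        have harg : am k - ε/2 - am k = -(ε/2) := by ring
        rw [harg, abs_neg, abs_of_pos (by linarith)]
        linarith
      have hle : gsr P v wm wp (A k) ≤ ((am k - ε/2 : ℝ) : EReal) :=
        sInf_le ⟨_, hx.le, rfl⟩
      have hfin := le_trans (h k).1 hle
      rw [EReal.coe_le_coe_iff] at hfin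
      linarith
end
end
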